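/- Let A and D be positive integers and i a nonnegative integer. A nonnegative integer j is a skew-compensated clock of i (i.e., |j·A − i·D| ≤ |m·A − i·D| for every nonnegative integer m) if and only if 2·|j·A − i·D| ≤ A. -/
import Mathlib


/-- A nonnegative integer `j` is a skew-compensated clock of `i`
iff `2·|j·A - i·D| ≤ A`. -/
theorem scc_iff_two_abs_le (A D i j : ℤ) (hA : 0 < A) (hD : 0 < D)
    (hi : 0 ≤ i) (hj : 0 ≤ j) :
    (∀ m : ℤ, 0 ≤ m → |j * A - i * D| ≤ |m * A - i * D|) ↔
    2 * |j * A - i * D| ≤ A := by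
  constructor
  · intro h
    by_cases hj0 : j = 0
    · subst hj0
      have h1 := h 1 one_pos.le
      have hid : 0 ≤ i * D := mul_nonneg hi hD.le
      rcases abs_cases (1 * A - i * D) with ⟨h1e, _⟩ | ⟨h1e, _⟩ <;>
        rcases abs_cases ((0 : ℤ) * A - i * D) with ⟨h0e, _⟩ | ⟨h0e, _⟩ <;>
        linarith
    · have hj1 : 0 ≤ j - 1 := by omega
      have h1 := h (j + 1) (by omega)
      have h2 := h (j - 1) hj1
      have e1 : (j + 1) * A - i * D = (j * A - i * D) + A := by ring
      have e2 : (j - 1) * A - i * D = (j * A - i * D) - A := by ring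
      rw [e1] at h1
      rw [e2] at h2
      rcases abs_cases (j * A - i * D) with ⟨he, _⟩ | ⟨he, _⟩ <;>
        rcases abs_cases (j * A - i * D + A) with ⟨hp, _⟩ | ⟨hp, _⟩ <;>
        rcases abs_cases (j * A - i * D - A) with ⟨hm, _⟩ | ⟨hm, _⟩ <;>
        linarith
  · intro h m hm
    rcases eq_or_ne m j with rfl | hne
    · exact le_refl _
    · have hmj : m - j ≠ 0 := sub_ne_zero.mpr hne
      have h1 : 1 ≤ |m - j| := Int.one_le_abs hmj
      have hAle : A ≤ |(m - j) * A| := by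
        rw [abs_mul, abs_of_pos hA]
        nlinarith
      have key : (m - j) * A = (m * A - i * D) - (j * A - i * D) := by ring
      have htri : |(m * A - i * D) - (j * A - i * D)| ≤ |m * A - i * D| + |j * A - i * D| :=
        abs_sub _ _
      rw [key] at hAle
      linarith
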